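/- Under the CGLO-style allocation where each of the N_t design points receives at least κ_{N_t} replications with κ_k → ∞, ∑_k k·exp(−aκ_k) < ∞ for all a > 0, and observations are i.i.d. Gaussian with variance bounded by σ̄², the event that some design point's sample mean deviates from its true mean by more than δ > 0 occurs only finitely often almost surely (over iterations t with N_t → ∞). -/

import Mathlib

open MeasureTheory ProbabilityTheory Filter
open scoped NNReal

lemma gauss_tail_aux (c : ℝ) (v : ℝ≥0) {δ : ℝ} (hδ : 0 < δ) :
    gaussianReal c v {x | δ < |x - c|} ≤
      ENNReal.ofReal (Real.sqrt 2 * Real.exp (-δ ^ 2 / (4 * v))) := by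
  have hs : MeasurableSet {x : ℝ | δ < |x - c|} :=
    measurableSet_lt measurable_const ((measurable_id.sub measurable_const).abs)
  by_cases hv : v = 0
  · subst hv
    rw [gaussianReal_zero_var, Measure.dirac_apply' _ hs]
    have : c ∉ {x : ℝ | δ < |x - c|} := by simp [hδ.not_gt]
    rw [Set.indicator_of_notMem this]
    exact zero_le
  · have hv' : (0 : ℝ) < v := by positivity
    rw [gaussianReal_apply_eq_integral _ hv]
    apply ENNReal.ofReal_le_ofReal
    set K : ℝ := (Real.sqrt (2 * Real.pi * v))⁻¹ with hK
    set A : ℝ := Real.exp (-δ ^ 2 / (4 * v)) with hA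
    have hKpos : 0 < K := by
      rw [hK]
      have : 0 < (2 : ℝ) * Real.pi * v := by positivity
      positivity
    have hApos : 0 < A := Real.exp_pos _
    set g : ℝ → ℝ := fun x => K * A * Real.exp (-(x - c) ^ 2 / (4 * v)) with hg
    have hb : (0 : ℝ) < (4 * (v : ℝ))⁻¹ := by positivity
    have hint0 : Integrable (fun x : ℝ => Real.exp (-(4 * (v : ℝ))⁻¹ * x ^ 2)) :=
      integrable_exp_neg_mul_sq hb
    have heq : ∀ x : ℝ, Real.exp (-(x - c) ^ 2 / (4 * v)) =
        Real.exp (-(4 * (v : ℝ))⁻¹ * (x - c) ^ 2) := by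
      intro x; ring_nf
    have hint1 : Integrable (fun x : ℝ => Real.exp (-(x - c) ^ 2 / (4 * v))) := by
      have := hint0.comp_sub_right c
      simpa only [heq] using this
    have hgint : Integrable g := hint1.const_mul _
    have hpdf_le : ∀ x ∈ {x : ℝ | δ < |x - c|}, gaussianPDFReal c v x ≤ g x := by
      intro x hx
      have hx' : δ ^ 2 ≤ (x - c) ^ 2 := by
        have h1 : δ ≤ |x - c| := le_of_lt hx
        calc δ ^ 2 ≤ |x - c| ^ 2 := by
              exact pow_le_pow_left₀ hδ.le h1 2
          _ = (x - c) ^ 2 := sq_abs _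
      rw [gaussianPDFReal, hg]
      have key : Real.exp (-(x - c) ^ 2 / (2 * v)) ≤ A * Real.exp (-(x - c) ^ 2 / (4 * v)) := by
        rw [hA, ← Real.exp_add, ← add_div]
        apply Real.exp_le_exp.mpr
        rw [div_le_div_iff₀ (by positivity) (by positivity)]
        nlinarith [hv', hx']
      calc (Real.sqrt (2 * Real.pi * v))⁻¹ * Real.exp (-(x - c) ^ 2 / (2 * v))
          ≤ (Real.sqrt (2 * Real.pi * v))⁻¹ * (A * Real.exp (-(x - c) ^ 2 / (4 * v))) :=
            mul_le_mul_of_nonneg_left key (by positivity)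
        _ = K * A * Real.exp (-(x - c) ^ 2 / (4 * v)) := by rw [hK]; ring
    have h2 : Real.sqrt (2 * Real.pi * (v : ℝ)) ≠ 0 := by positivity
    calc ∫ x in {x : ℝ | δ < |x - c|}, gaussianPDFReal c v x
        ≤ ∫ x in {x : ℝ | δ < |x - c|}, g x :=
          setIntegral_mono_on (integrable_gaussianPDFReal c v).integrableOn
            hgint.integrableOn hs hpdf_le
      _ ≤ ∫ x, g x := setIntegral_le_integral hgint (ae_of_all _ fun x => by
            simp only [hg]; positivity)
      _ = K * A * ∫ x, Real.exp (-(x - c) ^ 2 / (4 * v)) := integral_const_mul _ _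
      _ = K * A * Real.sqrt (Real.pi / (4 * (v : ℝ))⁻¹) := by
          have h3 : (∫ x, Real.exp (-(x - c) ^ 2 / (4 * (v : ℝ)))) =
              ∫ x, Real.exp (-(4 * (v : ℝ))⁻¹ * x ^ 2) := by
            simp_rw [heq]
            exact integral_sub_right_eq_self (fun x => Real.exp (-(4 * (v : ℝ))⁻¹ * x ^ 2)) c
          rw [h3, integral_gaussian]
      _ = Real.sqrt 2 * A := by
          have h1 : Real.pi / (4 * (v : ℝ))⁻¹ = 2 * (2 * Real.pi * v) := by
            field_simp; ring
          rw [h1, Real.sqrt_mul (by norm_num : (0:ℝ) ≤ 2), hK]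
          field_simp

/-- Under the CGLO-style allocation, where at iteration `t` each of the `N t` design
points has a sample mean that is Gaussian with variance at most `σ̄²/κ_{N_t}`, with
`κ` nondecreasing, `κ_k → ∞` and `∑ k·exp(−a·κ_k) < ∞` for all `a > 0`, the event
that some design point's sample mean deviates from its true mean by more than `δ`
occurs only finitely often, almost surely. -/
theorem deviation_events_finitely_often
    {Ω : Type*} [MeasurableSpace Ω] (P : Measure Ω) [IsProbabilityMeasure P]
    (κ : ℕ → ℝ) (hκ_mono : Monotone κ) (hκ_top : Tendsto κ atTop atTop)
    (hκ_sum : ∀ a : ℝ, 0 < a → Summable (fun k : ℕ => (k : ℝ) * Real.exp (-a * κ k)))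
    (hκ_pos : ∀ k, 0 < κ k)
    (N : ℕ → ℕ) (hN : StrictMono N)
    (σbarSq : ℝ) (hσ : 0 < σbarSq)
    (ybar : ℕ → ℕ → Ω → ℝ) (m : ℕ → ℕ → ℝ) (v : ℕ → ℕ → ℝ≥0)
    (hdist : ∀ t, ∀ i < N t, P.map (ybar t i) = gaussianReal (m t i) (v t i))
    (hv : ∀ t, ∀ i < N t, (v t i : ℝ) ≤ σbarSq / κ (N t))
    (δ : ℝ) (hδ : 0 < δ) :
    ∀ᵐ ω ∂P, {t : ℕ | ∃ i < N t, δ < |ybar t i ω - m t i|}.Finite := by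
  set a : ℝ := δ ^ 2 / (4 * σbarSq) with ha_def
  have ha : 0 < a := by positivity
  set e : ℕ → Set Ω := fun t => ⋃ i ∈ Finset.range (N t),
    ybar t i ⁻¹' {x : ℝ | δ < |x - m t i|} with he
  -- per-index bound
  have hbound : ∀ t, ∀ i < N t,
      P (ybar t i ⁻¹' {x : ℝ | δ < |x - m t i|}) ≤
        ENNReal.ofReal (Real.sqrt 2 * Real.exp (-a * κ (N t))) := by
    intro t i hi
    have hmeas : AEMeasurable (ybar t i) P := by
      by_contra h
      have h0 := Measure.map_of_not_aemeasurable h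
      rw [hdist t i hi] at h0
      have h1 : (gaussianReal (m t i) (v t i)) Set.univ = 1 := measure_univ
      rw [h0] at h1
      simp at h1
    have hs : MeasurableSet {x : ℝ | δ < |x - m t i|} :=
      measurableSet_lt measurable_const ((measurable_id.sub measurable_const).abs)
    have hmap : P (ybar t i ⁻¹' {x : ℝ | δ < |x - m t i|}) =
        (gaussianReal (m t i) (v t i)) {x : ℝ | δ < |x - m t i|} := by
      rw [← hdist t i hi, Measure.map_apply_of_aemeasurable hmeas hs]
    rw [hmap]
    by_cases hv0 : v t i = 0
    · rw [hv0, gaussianReal_zero_var, Measure.dirac_apply' _ hs]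
      have : m t i ∉ {x : ℝ | δ < |x - m t i|} := by simp [hδ.not_gt]
      rw [Set.indicator_of_notMem this]
      exact zero_le
    · refine (gauss_tail_aux (m t i) (v t i) hδ).trans (ENNReal.ofReal_le_ofReal ?_)
      have hv' : (0 : ℝ) < v t i := by positivity
      have hκN : 0 < κ (N t) := hκ_pos _
      apply mul_le_mul_of_nonneg_left _ (Real.sqrt_nonneg 2)
      apply Real.exp_le_exp.mpr
      have hvle : (v t i : ℝ) ≤ σbarSq / κ (N t) := hv t i hi
      have hcross : (v t i : ℝ) * κ (N t) ≤ σbarSq := by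
        rw [div_eq_mul_inv] at hvle
        calc (v t i : ℝ) * κ (N t) ≤ σbarSq * (κ (N t))⁻¹ * κ (N t) :=
              mul_le_mul_of_nonneg_right hvle hκN.le
          _ = σbarSq := by field_simp
      have key : a * κ (N t) ≤ δ ^ 2 / (4 * (v t i : ℝ)) := by
        rw [ha_def, div_mul_eq_mul_div, div_le_div_iff₀ (by positivity) (by positivity)]
        nlinarith [hcross, sq_nonneg δ]
      have := neg_le_neg key
      simpa [neg_div] using this
  -- event bound
  have hev : ∀ t, P (e t) ≤ ENNReal.ofReal
      ((N t : ℝ) * (Real.sqrt 2 * Real.exp (-a * κ (N t)))) := by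
    intro t
    calc P (e t) ≤ ∑ i ∈ Finset.range (N t),
          P (ybar t i ⁻¹' {x : ℝ | δ < |x - m t i|}) := measure_biUnion_finset_le _ _
      _ ≤ ∑ i ∈ Finset.range (N t),
          ENNReal.ofReal (Real.sqrt 2 * Real.exp (-a * κ (N t))) :=
            Finset.sum_le_sum fun i hi => hbound t i (Finset.mem_range.mp hi)
      _ = (N t : ℕ) • ENNReal.ofReal (Real.sqrt 2 * Real.exp (-a * κ (N t))) := by
            rw [Finset.sum_const, Finset.card_range]
      _ = ENNReal.ofReal ((N t : ℝ) * (Real.sqrt 2 * Real.exp (-a * κ (N t)))) := by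
            rw [nsmul_eq_mul, ← ENNReal.ofReal_natCast, ← ENNReal.ofReal_mul (by positivity)]
  -- summability
  set g : ℕ → ℝ := fun t => (N t : ℝ) * (Real.sqrt 2 * Real.exp (-a * κ (N t))) with hgdef
  have hgnn : ∀ t, 0 ≤ g t := fun t => by positivity
  have hgsum : Summable g := by
    have h1 : Summable (fun k : ℕ => (k : ℝ) * Real.exp (-a * κ k)) := hκ_sum a ha
    have h2 : Summable ((fun k : ℕ => (k : ℝ) * Real.exp (-a * κ k)) ∘ N) :=
      h1.comp_injective hN.injective
    have h3 := h2.mul_left (Real.sqrt 2)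
    apply h3.congr
    intro t
    simp only [Function.comp, hgdef]
    ring
  have hfin : (∑' t, P (e t)) ≠ ⊤ := by
    have h1 : (∑' t, P (e t)) ≤ ∑' t, ENNReal.ofReal (g t) := ENNReal.tsum_le_tsum hev
    have h2 : (∑' t, ENNReal.ofReal (g t)) = ENNReal.ofReal (∑' t, g t) :=
      (ENNReal.ofReal_tsum_of_nonneg hgnn hgsum).symm
    exact ne_top_of_le_ne_top (by rw [h2]; exact ENNReal.ofReal_ne_top) h1
  -- Borel–Cantelli
  filter_upwards [ae_eventually_notMem hfin] with ω hω
  obtain ⟨n, hn⟩ := eventually_atTop.mp hω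
  apply Set.Finite.subset (Set.finite_Iio n)
  intro t ht
  by_contra hlt
  apply hn t (Set.notMem_Iio.mp hlt)
  obtain ⟨i, hi, hdev⟩ := ht
  exact Set.mem_biUnion (Finset.mem_range.mpr hi) hdev
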